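/- Let ν ∈ (0,1], μ > 0, n₀ ≥ 1, and E_ν the Mittag-Leffler function E_{ν,1}. For 1 ≤ k ≤ n₀ define the sublinear state probabilities 𝔭_k^ν(t) = ∑_{l=0}^{n₀-k} C(n₀-k, l)(-1)^l E_ν(-(l+1) μ t^ν), and define the extinction probability 𝔭_0^ν(t) = ∑_{l=0}^{n₀} C(n₀,l)(-1)^l E_ν(-l μ t^ν). Then ∑_{k=0}^{n₀} 𝔭_k^ν(t) = 1 for all t > 0. -/

import Mathlib

lemma aux_choose (n l : ℕ) (hl : l < n) :
    ∑ k ∈ Finset.Icc 1 (n - l), (n - k).choose l = n.choose (l + 1) := by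
  obtain ⟨m, rfl⟩ : ∃ m, n = m + 1 := ⟨n - 1, by omega⟩
  rw [← Nat.sum_Icc_choose m l]
  apply Finset.sum_nbij' (fun k => m + 1 - k) (fun j => m + 1 - j)
  · intro k hk; simp only [Finset.mem_Icc] at *; omega
  · intro j hj; simp only [Finset.mem_Icc] at *; omega
  · intro k hk; simp only [Finset.mem_Icc] at *; omega
  · intro j hj; simp only [Finset.mem_Icc] at *; omega
  · intro k hk; rfl

theorem stmt_11 (ν : ℝ) (hν : ν ∈ Set.Ioc (0 : ℝ) 1) (μ : ℝ) (hμ : 0 < μ)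
    (n₀ : ℕ) (hn : 1 ≤ n₀)
    (E : ℝ → ℝ) (hE : ∀ x, E x = ∑' h : ℕ, x ^ h / Real.Gamma (ν * h + 1))
    (t : ℝ) (ht : 0 < t) :
    (∑ l ∈ Finset.range (n₀ + 1), (n₀.choose l : ℝ) * (-1) ^ l * E (-((l : ℝ) * μ * t ^ ν))) +
      ∑ k ∈ Finset.Icc 1 n₀,
        ∑ l ∈ Finset.range (n₀ - k + 1),
          ((n₀ - k).choose l : ℝ) * (-1) ^ l * E (-(((l : ℝ) + 1) * μ * t ^ ν)) = 1 := by
  have hE0 : E 0 = 1 := by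
    rw [hE 0, tsum_eq_single 0]
    · simp [Real.Gamma_one]
    · intro h hh
      simp [zero_pow hh]
  have hswap : ∑ k ∈ Finset.Icc 1 n₀, ∑ l ∈ Finset.range (n₀ - k + 1),
        ((n₀ - k).choose l : ℝ) * (-1) ^ l * E (-(((l : ℝ) + 1) * μ * t ^ ν))
      = ∑ l ∈ Finset.range n₀, ∑ k ∈ Finset.Icc 1 (n₀ - l),
        ((n₀ - k).choose l : ℝ) * (-1) ^ l * E (-(((l : ℝ) + 1) * μ * t ^ ν)) := by
    apply Finset.sum_comm'
    intro k l
    simp only [Finset.mem_Icc, Finset.mem_range]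
    omega
  rw [hswap]
  have hinner : ∀ l ∈ Finset.range n₀,
      ∑ k ∈ Finset.Icc 1 (n₀ - l),
        ((n₀ - k).choose l : ℝ) * (-1) ^ l * E (-(((l : ℝ) + 1) * μ * t ^ ν))
      = (n₀.choose (l + 1) : ℝ) * (-1) ^ l * E (-(((l : ℝ) + 1) * μ * t ^ ν)) := by
    intro l hl
    rw [← Finset.sum_mul, ← Finset.sum_mul, ← Nat.cast_sum,
      aux_choose n₀ l (Finset.mem_range.mp hl)]
  rw [Finset.sum_congr rfl hinner, Finset.sum_range_succ']
  push_cast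
  simp only [Nat.choose_zero_right, Nat.cast_one, pow_zero, zero_mul, neg_zero, hE0]
  rw [add_comm, ← add_assoc, ← Finset.sum_add_distrib]
  have : ∀ l ∈ Finset.range n₀,
      (n₀.choose (l + 1) : ℝ) * (-1) ^ l * E (-(((l : ℝ) + 1) * μ * t ^ ν)) +
        (n₀.choose (l + 1) : ℝ) * (-1) ^ (l + 1) * E (-(((l : ℝ) + 1) * μ * t ^ ν)) = 0 := by
    intro l _
    ring
  rw [Finset.sum_congr rfl this, Finset.sum_const_zero]
  ring
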